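/- Homogeneous temporal GNNs are as expressive as inhomogeneous ones: every R²-TGNN (A_1,…,A_T) with possibly different per-timestamp models is equivalent, as a node-feature transformation on temporal graphs with T timestamps, to a homogeneous R²-TGNN in which all timestamps share the same model; the construction runs all T models in parallel on T disjoint feature slices of dimension T·d. -/

import Mathlib

inductive Var : Type
  | x | y
deriving DecidableEq

structure MRGraph (P1 P2 : Type) where
  V : Type
  [fintV : Fintype V]
  [decV : DecidableEq V]
  unary : P1 → V → Prop
  rel : P2 → V → V → Prop
  [decU : ∀ p, DecidablePred (unary p)]
  [decR : ∀ r, DecidableRel (rel r)]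

attribute [instance] MRGraph.fintV MRGraph.decV MRGraph.decU MRGraph.decR

inductive FOC2 (P1 P2 : Type) : Type
  | tru : FOC2 P1 P2
  | atom : P1 → Var → FOC2 P1 P2
  | rel : P2 → Var → Var → FOC2 P1 P2
  | and : FOC2 P1 P2 → FOC2 P1 P2 → FOC2 P1 P2
  | or : FOC2 P1 P2 → FOC2 P1 P2 → FOC2 P1 P2
  | not : FOC2 P1 P2 → FOC2 P1 P2
  | exge : ℕ → Var → FOC2 P1 P2 → FOC2 P1 P2

variable {P1 P2 : Type}

/-- Satisfaction of a `FOC2` formula in a multi-relational graph under an assignment. -/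
def MRGraph.sat (G : MRGraph P1 P2) : (Var → G.V) → FOC2 P1 P2 → Prop
  | _, .tru => True
  | σ, .atom p v => G.unary p (σ v)
  | σ, .rel r u w => G.rel r (σ u) (σ w)
  | σ, .and φ ψ => G.sat σ φ ∧ G.sat σ ψ
  | σ, .or φ ψ => G.sat σ φ ∨ G.sat σ ψ
  | σ, .not φ => ¬ G.sat σ φ
  | σ, .exge n v φ => ∃ S : Finset G.V, S.card = n ∧ ∀ a ∈ S, G.sat (Function.update σ v a) φ

/-- Quantifier depth. -/
def FOC2.depth : FOC2 P1 P2 → ℕ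
  | .tru => 0
  | .atom _ _ => 0
  | .rel _ _ _ => 0
  | .and φ ψ => max φ.depth ψ.depth
  | .or φ ψ => max φ.depth ψ.depth
  | .not φ => φ.depth
  | .exge _ _ φ => φ.depth + 1

/-- All counting thresholds are at most `m`. -/
def FOC2.thresholdsLe (m : ℕ) : FOC2 P1 P2 → Prop
  | .tru => True
  | .atom _ _ => True
  | .rel _ _ _ => True
  | .and φ ψ => φ.thresholdsLe m ∧ ψ.thresholdsLe m
  | .or φ ψ => φ.thresholdsLe m ∧ ψ.thresholdsLe m
  | .not φ => φ.thresholdsLe m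
  | .exge n _ φ => n ≤ m ∧ φ.thresholdsLe m

/-- Free variables. -/
def FOC2.freeVars : FOC2 P1 P2 → Finset Var
  | .tru => ∅
  | .atom _ v => {v}
  | .rel _ u w => {u, w}
  | .and φ ψ => φ.freeVars ∪ ψ.freeVars
  | .or φ ψ => φ.freeVars ∪ ψ.freeVars
  | .not φ => φ.freeVars
  | .exge _ v φ => φ.freeVars \ {v}

/-- Parse-tree size. -/
def FOC2.size : FOC2 P1 P2 → ℕ
  | .tru => 1
  | .atom _ _ => 1
  | .rel _ _ _ => 1
  | .and φ ψ => φ.size + ψ.size + 1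
  | .or φ ψ => φ.size + ψ.size + 1
  | .not φ => φ.size + 1
  | .exge _ _ φ => φ.size + 1

/-- A generic R²-GNN run: per-layer combination functions taking the node's previous
feature, for each relation the multiset of neighbours' features, and the global multiset. -/
def runGNN (G : MRGraph P1 P2) {X : Type} (h0 : G.V → X)
    (C : ℕ → X → (P2 → Multiset X) → Multiset X → X) : ℕ → G.V → X
  | 0, v => h0 v
  | i + 1, v =>
    C i (runGNN G h0 C i v)
      (fun r => (Finset.univ.filter (fun u => G.rel r v u)).val.map (runGNN G h0 C i))
      (Finset.univ.val.map (runGNN G h0 C i))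

/-- A temporal knowledge graph with `T` snapshots over a common node set. -/
structure TGraph (P1 P2 : Type) (T : ℕ) where
  V : Type
  [fintV : Fintype V]
  [decV : DecidableEq V]
  unary : Fin T → P1 → V → Prop
  rel : Fin T → P2 → V → V → Prop
  [decU : ∀ t p, DecidablePred (unary t p)]
  [decR : ∀ t r, DecidableRel (rel t r)]

attribute [instance] TGraph.fintV TGraph.decV TGraph.decU TGraph.decR

variable {T : ℕ}

/-- The snapshot at time `t`. -/
def TGraph.snap (G : TGraph P1 P2 T) (t : Fin T) : MRGraph P1 P2 where
  V := G.V
  unary := G.unary t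
  rel := G.rel t
  decU := G.decU t
  decR := G.decR t

/-- The collapse `H`: the union over all timestamps of the temporalized snapshots, a
static graph over the timestamped predicates. -/
def TGraph.collapse (G : TGraph P1 P2 T) : MRGraph (P1 × Fin T) (P2 × Fin T) where
  V := G.V
  unary := fun p v => G.unary p.2 p.1 v
  rel := fun r a b => G.rel r.2 r.1 a b
  decU := fun p => G.decU p.2 p.1
  decR := fun r => G.decR r.2 r.1

/-- A run of an R²-TGNN: at each timestamp `t`, the R²-GNN `C t` (with `Lt t` layers)
is run on snapshot `t`, initialized with the encoding of the one-hot unary information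
at time `t` together with the previous timestamp's feature. -/
def runT (G : TGraph P1 P2 T) {X : Type} (xinit : X)
    (enc : (P1 → Bool) → X → X)
    (C : Fin T → ℕ → X → (P2 → Multiset X) → Multiset X → X)
    (Lt : Fin T → ℕ) : ℕ → G.V → X
  | 0, _ => xinit
  | t + 1, v =>
    if h : t < T then
      runGNN (G.snap ⟨t, h⟩)
        (fun u => enc (fun q => @decide (G.unary ⟨t, h⟩ q u) (G.decU ⟨t, h⟩ q u))
          (runT G xinit enc C Lt t u))
        (C ⟨t, h⟩) (Lt ⟨t, h⟩) v
    else runT G xinit enc C Lt t v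

/-- Two nodes are connected if some relation holds between them in some direction. -/
def connected (G : MRGraph P1 P2) [Fintype P2] (p : G.V × G.V) : Prop :=
  ∃ r : P2, G.rel r p.1 p.2 ∨ G.rel r p.2 p.1

instance (G : MRGraph P1 P2) [Fintype P2] (p : G.V × G.V) : Decidable (connected G p) := by
  unfold connected; infer_instance

/-- Unary predicates of the transformed graph: original unary predicates live on the
primal (original) nodes, and the fresh predicate `primal` marks them. -/
def transUnaryB (G : MRGraph P1 P2) [Fintype P2] :
    (P1 ⊕ Unit) → (G.V ⊕ {p : G.V × G.V // connected G p}) → Bool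
  | Sum.inl q, Sum.inl v => decide (G.unary q v)
  | Sum.inr _, Sum.inl _ => true
  | _, _ => false

/-- Relations of the transformed graph: original relations are moved onto the pairs
`(e_ab, e_ba)` of added nodes, `aux1` (encoded `true`) connects `a` with `e_ab`, and
`aux2` (encoded `false`) connects `e_ab` with `e_ba`. -/
def transRelB (G : MRGraph P1 P2) [Fintype P2] :
    (P2 ⊕ Bool) → (G.V ⊕ {p : G.V × G.V // connected G p}) →
      (G.V ⊕ {p : G.V × G.V // connected G p}) → Bool
  | Sum.inl q, Sum.inr e, Sum.inr e' =>
      decide (e'.val = (e.val.2, e.val.1)) && decide (G.rel q e.val.1 e.val.2)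
  | Sum.inr true, Sum.inl a, Sum.inr e => decide (e.val.1 = a)
  | Sum.inr true, Sum.inr e, Sum.inl a => decide (e.val.1 = a)
  | Sum.inr false, Sum.inr e, Sum.inr e' => decide (e'.val = (e.val.2, e.val.1))
  | _, _, _ => false

/-- The graph transformation `F` on static multi-relational graphs. -/
def transF (G : MRGraph P1 P2) [Fintype P2] : MRGraph (P1 ⊕ Unit) (P2 ⊕ Bool) where
  V := G.V ⊕ {p : G.V × G.V // connected G p}
  unary := fun q v => transUnaryB G q v = true
  rel := fun r a b => transRelB G r a b = true
  decU := fun _ _ => instDecidableEqBool _ _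
  decR := fun _ _ _ => instDecidableEqBool _ _

/-- Two nodes of a temporal graph are connected if some relation holds between them at
some timestamp. -/
def connectedT (G : TGraph P1 P2 T) [Fintype P2] (p : G.V × G.V) : Prop :=
  ∃ (t : Fin T) (r : P2), G.rel t r p.1 p.2 ∨ G.rel t r p.2 p.1

instance (G : TGraph P1 P2 T) [Fintype P2] (p : G.V × G.V) :
    Decidable (connectedT G p) := by
  unfold connectedT; infer_instance

/-- Per-snapshot unary predicates of the transformed temporal graph. -/
def transTUnaryB (G : TGraph P1 P2 T) [Fintype P2] (t : Fin T) :
    (P1 ⊕ Unit) → (G.V ⊕ {p : G.V × G.V // connectedT G p}) → Bool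
  | Sum.inl q, Sum.inl v => decide (G.unary t q v)
  | Sum.inr _, Sum.inl _ => true
  | _, _ => false

/-- Per-snapshot relations of the transformed temporal graph: original relations of
snapshot `t` are moved onto the added node pairs, while the `aux1`/`aux2` structural
edges are present at every timestamp. -/
def transTRelB (G : TGraph P1 P2 T) [Fintype P2] (t : Fin T) :
    (P2 ⊕ Bool) → (G.V ⊕ {p : G.V × G.V // connectedT G p}) →
      (G.V ⊕ {p : G.V × G.V // connectedT G p}) → Bool
  | Sum.inl q, Sum.inr e, Sum.inr e' =>
      decide (e'.val = (e.val.2, e.val.1)) && decide (G.rel t q e.val.1 e.val.2)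
  | Sum.inr true, Sum.inl a, Sum.inr e => decide (e.val.1 = a)
  | Sum.inr true, Sum.inr e, Sum.inl a => decide (e.val.1 = a)
  | Sum.inr false, Sum.inr e, Sum.inr e' => decide (e'.val = (e.val.2, e.val.1))
  | _, _, _ => false

/-- The per-snapshot graph transformation `F^T` of a temporal graph. -/
def transT (G : TGraph P1 P2 T) [Fintype P2] : TGraph (P1 ⊕ Unit) (P2 ⊕ Bool) T where
  V := G.V ⊕ {p : G.V × G.V // connectedT G p}
  unary := fun t q v => transTUnaryB G t q v = true
  rel := fun t r a b => transTRelB G t r a b = true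
  decU := fun _ _ _ => instDecidableEqBool _ _
  decR := fun _ _ _ _ => instDecidableEqBool _ _

section HomogAux

variable {P1 P2 : Type} {T : ℕ} {X : Type}

/-- The combination function of the homogeneous model: the state carries a timestamp
counter together with the simulated feature. -/
def hC (C : Fin T → ℕ → X → (P2 → Multiset X) → Multiset X → X) (Lt : Fin T → ℕ)
    (N : ℕ) : ℕ → (ℕ × X) → (P2 → Multiset (ℕ × X)) → Multiset (ℕ × X) → (ℕ × X) :=
  fun i s nbr glob =>
    ((if i = N then s.1 + 1 else s.1),
      if h : s.1 < T then
        if i < Lt ⟨s.1, h⟩ then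
          C ⟨s.1, h⟩ i s.2 (fun r => (nbr r).map Prod.snd) (glob.map Prod.snd)
        else s.2
      else s.2)

lemma gnn_sim (C : Fin T → ℕ → X → (P2 → Multiset X) → Multiset X → X)
    (Lt : Fin T → ℕ) (N : ℕ) (t : Fin T) (hN : Lt t ≤ N)
    (G : MRGraph P1 P2) (h0 : G.V → X) :
    ∀ i, i ≤ N + 1 → ∀ v,
      runGNN G (fun u => ((t : ℕ), h0 u)) (hC C Lt N) i v =
        ((if i = N + 1 then (t : ℕ) + 1 else (t : ℕ)),
          runGNN G h0 (C t) (min i (Lt t)) v) := by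
  intro i
  induction i with
  | zero =>
    intro _ v
    have : ¬ (0 = N + 1) := by omega
    simp [runGNN, this]
  | succ i ih =>
    intro hi v
    have hi' : i ≤ N + 1 := Nat.le_of_succ_le hi
    have hiN : i ≠ N + 1 := by omega
    have hfst : ∀ u, runGNN G (fun u => ((t : ℕ), h0 u)) (hC C Lt N) i u =
        ((t : ℕ), runGNN G h0 (C t) (min i (Lt t)) u) := by
      intro u; rw [ih hi' u]; simp [hiN]
    show hC C Lt N i (runGNN G (fun u => ((t : ℕ), h0 u)) (hC C Lt N) i v)
        (fun r => (Finset.univ.filter (fun u => G.rel r v u)).val.map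
          (runGNN G (fun u => ((t : ℕ), h0 u)) (hC C Lt N) i))
        (Finset.univ.val.map (runGNN G (fun u => ((t : ℕ), h0 u)) (hC C Lt N) i)) = _
    set f := runGNN G (fun u => ((t : ℕ), h0 u)) (hC C Lt N) i with hf
    rw [hfst v]
    unfold hC
    have ht : (t : ℕ) < T := t.isLt
    have hteta : (⟨(t : ℕ), ht⟩ : Fin T) = t := Fin.eta t ht
    simp only [ht, dif_pos, hteta]
    have hmap : ∀ (S : Multiset G.V),
        (S.map f).map Prod.snd =
          S.map (runGNN G h0 (C t) (min i (Lt t))) := by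
      intro S
      rw [Multiset.map_map]
      exact Multiset.map_congr rfl (fun u _ => by simp [hfst u])
    refine Prod.ext ?_ ?_
    · by_cases h : i = N <;> simp [h] <;> omega
    · simp only
      by_cases hlt : i < Lt t
      · rw [if_pos hlt]
        have h1 : min i (Lt t) = i := min_eq_left (le_of_lt hlt)
        have h2 : min (i + 1) (Lt t) = i + 1 := min_eq_left hlt
        rw [h2]
        show _ = runGNN G h0 (C t) (i + 1) v
        simp only [runGNN]
        rw [h1]
        congr 1
        · funext r; rw [hmap]; rw [h1]
        · rw [hmap, h1]
      · rw [if_neg hlt]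
        have h2 : min (i + 1) (Lt t) = Lt t := min_eq_right (by omega)
        have h1 : min i (Lt t) = Lt t := min_eq_right (by omega)
        rw [h1, h2]

lemma runT_sim (xinit : X) (enc : (P1 → Bool) → X → X)
    (C : Fin T → ℕ → X → (P2 → Multiset X) → Multiset X → X)
    (Lt : Fin T → ℕ) (N : ℕ) (hN : ∀ t, Lt t ≤ N) (G : TGraph P1 P2 T) :
    ∀ t, t ≤ T → ∀ v : G.V,
      runT G ((0 : ℕ), xinit) (fun p s => (s.1, enc p s.2))
          (fun _ => hC C Lt N) (fun _ => N + 1) t v =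
        (t, runT G xinit enc C Lt t v) := by
  intro t
  induction t with
  | zero => intro _ v; simp [runT]
  | succ t ih =>
    intro ht v
    have htT : t < T := ht
    show (if h : t < T then _ else _) = _
    rw [dif_pos htT]
    conv_rhs => rw [runT]
    rw [dif_pos htT]
    have hg := gnn_sim C Lt N ⟨t, htT⟩ (hN _) (G.snap ⟨t, htT⟩)
      (fun u => enc (fun q => @decide (G.unary ⟨t, htT⟩ q u) (G.decU ⟨t, htT⟩ q u)) (runT G xinit enc C Lt t u))
      (N + 1) le_rfl v
    have hmin : min (N + 1) (Lt ⟨t, htT⟩) = Lt ⟨t, htT⟩ :=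
      min_eq_right (by have := hN (⟨t, htT⟩ : Fin T); omega)
    rw [hmin, if_pos rfl] at hg
    refine Eq.trans ?_ hg
    congr 1
    funext u
    rw [ih (le_of_lt htT) u]

end HomogAux

/-- Every (possibly inhomogeneous) R²-TGNN is equivalent, as a node-feature
transformation on temporal graphs with `T` timestamps, to a homogeneous R²-TGNN in which
all timestamps share the same model: the homogeneous model's final feature determines the
original one via a fixed projection `π` (in the construction, reading off one of `T`
parallel feature slices). -/

theorem stmt17 {P1 P2 : Type} (T : ℕ) (X : Type) (xinit : X)
    (enc : (P1 → Bool) → X → X)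
    (C : Fin T → ℕ → X → (P2 → Multiset X) → Multiset X → X)
    (Lt : Fin T → ℕ) :
    ∃ (X' : Type) (xinit' : X') (enc' : (P1 → Bool) → X' → X')
      (C' : ℕ → X' → (P2 → Multiset X') → Multiset X' → X') (L' : ℕ) (π : X' → X),
      ∀ (G : TGraph P1 P2 T) (v : G.V),
        π (runT G xinit' enc' (fun _ => C') (fun _ => L') T v) =
          runT G xinit enc C Lt T v := by
  classical
  refine ⟨ℕ × X, ((0 : ℕ), xinit), (fun p s => (s.1, enc p s.2)),
    hC C Lt (Finset.univ.sup Lt), Finset.univ.sup Lt + 1, Prod.snd, ?_⟩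
  intro G v
  rw [runT_sim xinit enc C Lt (Finset.univ.sup Lt)
    (fun t => Finset.le_sup (Finset.mem_univ t)) G T le_rfl v]
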